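/- Let E be a real inner product space and let F : E → ℝ be convex and differentiable with gradient ∇F. Let x₀, x₁, …, x_m ∈ E and let λ₀, …, λ_m ≥ 0 with Σ_j λ_j = 1. Then Σ_j λ_j F(x_j) − F(Σ_j λ_j x_j) ≤ (1/2) Σ_i Σ_j λ_i λ_j ⟨∇F(x_i) − ∇F(x_j), x_i − x_j⟩. -/

import Mathlib

open scoped RealInnerProductSpace

/-- Supporting hyperplane inequality for a convex differentiable function. -/
lemma stmt_9_support {E : Type*} [NormedAddCommGroup E] [InnerProductSpace ℝ E] [CompleteSpace E]
    (F : E → ℝ) (F' : E → E)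
    (hconv : ConvexOn ℝ Set.univ F)
    (hgrad : ∀ x, HasGradientAt F (F' x) x)
    (a b : E) : ⟪F' a, b - a⟫ ≤ F b - F a := by
  set g : ℝ → ℝ := fun t => F (a + t • (b - a)) with hg
  have hderiv : HasDerivAt g ⟪F' (a + (0:ℝ) • (b - a)), b - a⟫ 0 := by
    have h1 : HasDerivAt (fun t : ℝ => a + t • (b - a)) (b - a) (0:ℝ) := by
      simpa using ((hasDerivAt_id (0:ℝ)).smul_const (b - a)).const_add a
    have h2 := ((hgrad (a + (0:ℝ) • (b - a))).hasFDerivAt).comp_hasDerivAt 0 h1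
    simp only [zero_smul, add_zero] at h2 ⊢
    exact h2
  have hgconv : ConvexOn ℝ Set.univ g := by
    have haff : ConvexOn ℝ ((AffineMap.lineMap a b : ℝ →ᵃ[ℝ] E) ⁻¹' Set.univ)
        (F ∘ (AffineMap.lineMap a b : ℝ →ᵃ[ℝ] E)) :=
      hconv.comp_affineMap _
    have hpre : ((AffineMap.lineMap a b : ℝ →ᵃ[ℝ] E) ⁻¹' Set.univ) = Set.univ := by simp
    rw [hpre] at haff
    convert haff using 1
    funext t
    simp [hg, AffineMap.lineMap_apply, add_comm]
  have hslope := hgconv.le_slope_of_hasDerivAt (Set.mem_univ (0 : ℝ)) (Set.mem_univ (1 : ℝ))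
    one_pos hderiv
  have h0 : g 0 = F a := by simp [hg]
  have h1 : g 1 = F b := by simp [hg]
  have hsl : slope g 0 1 = F b - F a := by
    simp [slope, h0, h1]
  rw [hsl] at hslope
  simpa using hslope

/-- Jensen-gap bound for a convex differentiable function on an inner product
space: the gap is bounded by half the double sum of gradient–increment inner
products. -/
theorem stmt_9 {E : Type*} [NormedAddCommGroup E] [InnerProductSpace ℝ E] [CompleteSpace E]
    (F : E → ℝ) (F' : E → E)
    (hconv : ConvexOn ℝ Set.univ F)
    (hgrad : ∀ x, HasGradientAt F (F' x) x)
    (m : ℕ) (x : Fin (m + 1) → E) (l : Fin (m + 1) → ℝ)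
    (hl : ∀ j, 0 ≤ l j) (hls : ∑ j, l j = 1) :
    ∑ j, l j * F (x j) - F (∑ j, l j • x j)
      ≤ (1/2) * ∑ i, ∑ j, l i * l j * ⟪F' (x i) - F' (x j), x i - x j⟫ := by
  set xb : E := ∑ j, l j • x j with hxb
  have key : ∀ i, F (x i) - F xb ≤ ⟪F' (x i), x i - xb⟫ := by
    intro i
    have h := stmt_9_support F F' hconv hgrad (x i) xb
    have h2 : ⟪F' (x i), x i - xb⟫ = -⟪F' (x i), xb - x i⟫ := by
      rw [← inner_neg_right]; congr 1; abel
    linarith [h, h2.ge]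
  -- decomposition of x i - xb
  have hdec : ∀ i, ⟪F' (x i), x i - xb⟫ = ∑ j, l j * ⟪F' (x i), x i - x j⟫ := by
    intro i
    have : x i - xb = ∑ j, l j • (x i - x j) := by
      rw [hxb]
      rw [Finset.sum_congr rfl (fun j _ => smul_sub (l j) (x i) (x j))]
      rw [Finset.sum_sub_distrib, ← Finset.sum_smul, hls, one_smul]
    rw [this, inner_sum]
    exact Finset.sum_congr rfl fun j _ => real_inner_smul_right _ _ _
  have step1 : ∑ j, l j * F (x j) - F xb ≤ ∑ i, l i * ⟪F' (x i), x i - xb⟫ := by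
    have heq : ∑ j, l j * F (x j) - F xb = ∑ i, l i * (F (x i) - F xb) := by
      rw [Finset.sum_congr rfl (fun i _ => mul_sub (l i) (F (x i)) (F xb))]
      rw [Finset.sum_sub_distrib, ← Finset.sum_mul, hls, one_mul]
    rw [heq]
    exact Finset.sum_le_sum fun i _ => mul_le_mul_of_nonneg_left (key i) (hl i)
  have step2 : ∑ i, l i * ⟪F' (x i), x i - xb⟫
      = ∑ i, ∑ j, l i * l j * ⟪F' (x i), x i - x j⟫ := by
    refine Finset.sum_congr rfl fun i _ => ?_
    rw [hdec i, Finset.mul_sum]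
    exact Finset.sum_congr rfl fun j _ => by ring
  have step3 : ∑ i, ∑ j, l i * l j * ⟪F' (x i) - F' (x j), x i - x j⟫
      = 2 * ∑ i, ∑ j, l i * l j * ⟪F' (x i), x i - x j⟫ := by
    have expand : ∀ i j, l i * l j * ⟪F' (x i) - F' (x j), x i - x j⟫
        = l i * l j * ⟪F' (x i), x i - x j⟫ + l j * l i * ⟪F' (x j), x j - x i⟫ := by
      intro i j
      rw [inner_sub_left]
      have hneg : ⟪F' (x j), x i - x j⟫ = -⟪F' (x j), x j - x i⟫ := by
        rw [← inner_neg_right]; congr 1; abel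
      rw [hneg]; ring
    calc ∑ i, ∑ j, l i * l j * ⟪F' (x i) - F' (x j), x i - x j⟫
        = ∑ i, ∑ j, (l i * l j * ⟪F' (x i), x i - x j⟫
            + l j * l i * ⟪F' (x j), x j - x i⟫) := by
          exact Finset.sum_congr rfl fun i _ => Finset.sum_congr rfl fun j _ => expand i j
      _ = (∑ i, ∑ j, l i * l j * ⟪F' (x i), x i - x j⟫)
            + ∑ i, ∑ j, l j * l i * ⟪F' (x j), x j - x i⟫ := by
          rw [← Finset.sum_add_distrib]
          exact Finset.sum_congr rfl fun i _ => Finset.sum_add_distrib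
      _ = (∑ i, ∑ j, l i * l j * ⟪F' (x i), x i - x j⟫)
            + ∑ j, ∑ i, l j * l i * ⟪F' (x j), x j - x i⟫ := by
          rw [Finset.sum_comm (s := Finset.univ) (t := Finset.univ)]
      _ = 2 * ∑ i, ∑ j, l i * l j * ⟪F' (x i), x i - x j⟫ := by ring
  rw [step3]
  have : (1/2 : ℝ) * (2 * ∑ i, ∑ j, l i * l j * ⟪F' (x i), x i - x j⟫)
      = ∑ i, ∑ j, l i * l j * ⟪F' (x i), x i - x j⟫ := by ring
  rw [this, ← step2]
  exact step1
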